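/- Let b > 2 be real. Let (Ω, F, P) be a probability space with a filtration (F_n)_{n≥0}, and let (V_n)_{n≥1} be a sequence of random variables such that V_n is F_n-measurable, V_n takes values in {-2, -1, 1}, and almost surely P(V_n = -2 | F_{n-1}) ≤ 2/(2+b) and P(V_n = -1 | F_{n-1}) ≤ 2/(2+b). Then for every real v ≥ 1 and every n ≥ 1, E[v^{-(V_1 + V_2 + ⋯ + V_n)}] ≤ ((2v² + 2v + (b-2)/v)/(2+b))^n. -/

import Mathlib

open MeasureTheory

lemma integrable_of_bdd {Ω : Type*} {mΩ : MeasurableSpace Ω} {P : Measure Ω}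
    [IsFiniteMeasure P] {f : Ω → ℝ} (hf : AEStronglyMeasurable f P) {C : ℝ}
    (h : ∀ ω, ‖f ω‖ ≤ C) : Integrable f P :=
  ⟨hf, HasFiniteIntegral.of_bounded (ae_of_all _ h)⟩

lemma integrable_indicator_one {Ω : Type*} {mΩ : MeasurableSpace Ω} (P : Measure Ω)
    [IsFiniteMeasure P] {A : Set Ω} (hA : MeasurableSet A) :
    Integrable (A.indicator (fun _ => (1 : ℝ))) P :=
  (integrable_const (1 : ℝ)).indicator hA

lemma key_abstract {Ω : Type*} {mΩ : MeasurableSpace Ω} (P : Measure Ω)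
    [IsProbabilityMeasure P] {m : MeasurableSpace Ω} (hm : m ≤ mΩ)
    {X : Ω → ℝ} (hX : StronglyMeasurable[m] X) {C : ℝ} (hC : 0 ≤ C)
    (hX0 : ∀ ω, 0 ≤ X ω) (hXC : ∀ ω, X ω ≤ C)
    {A : Set Ω} (hA : MeasurableSet[mΩ] A) {c : ℝ}
    (hc : ∀ᵐ ω ∂P, (P[A.indicator (fun _ => (1 : ℝ)) | m]) ω ≤ c) :
    ∫ ω, X ω * A.indicator (fun _ => (1 : ℝ)) ω ∂P ≤ c * ∫ ω, X ω ∂P := by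
  haveI : SigmaFinite (P.trim hm) := inferInstance
  have hXm : AEStronglyMeasurable[mΩ] X P := (hX.mono hm).aestronglyMeasurable
  have hXint : Integrable X P := integrable_of_bdd hXm (fun ω => by
    rw [Real.norm_eq_abs, abs_of_nonneg (hX0 ω)]; exact hXC ω)
  have hind : Integrable (A.indicator (fun _ => (1 : ℝ))) P :=
    integrable_indicator_one P hA
  have hXind : Integrable (X * A.indicator (fun _ => (1 : ℝ))) P := by
    refine integrable_of_bdd (hXm.mul hind.1) (C := C) (fun ω => ?_)
    rw [Pi.mul_apply, Real.norm_eq_abs, abs_mul]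
    by_cases hω : ω ∈ A
    · simp only [Set.indicator_of_mem hω, abs_one, mul_one,
        abs_of_nonneg (hX0 ω)]
      exact hXC ω
    · simp only [Set.indicator_of_notMem hω, abs_zero, mul_zero]
      exact hC
  have hpull := condExp_mul_of_stronglyMeasurable_left hX hXind hind
  have e1 : ∫ ω, X ω * A.indicator (fun _ => (1 : ℝ)) ω ∂P
      = ∫ ω, (X * A.indicator (fun _ => (1 : ℝ))) ω ∂P := rfl
  have h1 : ∫ ω, X ω * A.indicator (fun _ => (1 : ℝ)) ω ∂P
      = ∫ ω, (X * P[A.indicator (fun _ => (1 : ℝ)) | m]) ω ∂P :=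
    e1.trans ((integral_condExp (μ := P)
      (f := X * A.indicator (fun _ => (1 : ℝ))) hm).symm.trans
      (integral_congr_ae hpull))
  rw [h1]
  have hint1 : Integrable (X * P[A.indicator (fun _ => (1 : ℝ)) | m]) P :=
    (integrable_condExp).congr hpull
  have hint2 : Integrable (fun ω => X ω * c) P := hXint.mul_const c
  have hmono : ∫ ω, (X * P[A.indicator (fun _ => (1 : ℝ)) | m]) ω ∂P
      ≤ ∫ ω, X ω * c ∂P := by
    refine integral_mono_ae hint1 hint2 ?_
    filter_upwards [hc] with ω hω
    exact mul_le_mul_of_nonneg_left hω (hX0 ω)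
  refine hmono.trans ?_
  rw [integral_mul_const]
  rw [mul_comm]

theorem exponential_moment_bound
    {Ω : Type*} {mΩ : MeasurableSpace Ω} (P : Measure Ω) [IsProbabilityMeasure P]
    (ℱ : Filtration ℕ mΩ) (b : ℝ) (hb : 2 < b)
    (V : ℕ → Ω → ℝ)
    (hmeas : ∀ n, 1 ≤ n → StronglyMeasurable[ℱ n] (V n))
    (hrange : ∀ n, 1 ≤ n → ∀ ω, V n ω = -2 ∨ V n ω = -1 ∨ V n ω = 1)
    (h2 : ∀ n, 1 ≤ n → ∀ᵐ ω ∂P,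
      (P[Set.indicator {ω | V n ω = -2} (fun _ => (1 : ℝ)) | ℱ (n - 1)]) ω ≤ 2 / (2 + b))
    (h1 : ∀ n, 1 ≤ n → ∀ᵐ ω ∂P,
      (P[Set.indicator {ω | V n ω = -1} (fun _ => (1 : ℝ)) | ℱ (n - 1)]) ω ≤ 2 / (2 + b))
    (v : ℝ) (hv : 1 ≤ v) (n : ℕ) (hn : 1 ≤ n) :
    ∫ ω, v ^ (-(∑ i ∈ Finset.Icc 1 n, V i ω)) ∂P ≤
      ((2 * v^2 + 2 * v + (b - 2) / v) / (2 + b)) ^ n := by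
  clear hn
  have hv0 : 0 < v := lt_of_lt_of_le one_pos hv
  have hvne : v ≠ 0 := ne_of_gt hv0
  have hb0 : (0 : ℝ) < 2 + b := by linarith
  have hbne : (2 : ℝ) + b ≠ 0 := ne_of_gt hb0
  set γ : ℝ := (2 * v^2 + 2 * v + (b - 2) / v) / (2 + b) with hγdef
  have hγ0 : 0 ≤ γ := by
    apply div_nonneg _ (le_of_lt hb0)
    have : 0 ≤ (b - 2) / v := div_nonneg (by linarith) (le_of_lt hv0)
    nlinarith
  -- measurability of partial sums
  have hS : ∀ n, StronglyMeasurable[ℱ n] (fun ω => ∑ i ∈ Finset.Icc 1 n, V i ω) := by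
    intro n
    refine Finset.stronglyMeasurable_fun_sum _ (fun i hi => ?_)
    rw [Finset.mem_Icc] at hi
    exact (hmeas i hi.1).mono (ℱ.mono hi.2)
  have hg : ∀ n, StronglyMeasurable[ℱ n] (fun ω => v ^ (-(∑ i ∈ Finset.Icc 1 n, V i ω))) := by
    intro n
    have heq : (fun ω => v ^ (-(∑ i ∈ Finset.Icc 1 n, V i ω)))
        = fun ω => Real.exp (Real.log v * (-(∑ i ∈ Finset.Icc 1 n, V i ω))) := by
      funext ω; rw [Real.rpow_def_of_pos hv0]
    rw [heq]
    exact Real.continuous_exp.comp_stronglyMeasurable ((hS n).neg.const_mul _)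
  -- lower bound of V
  have hVlb : ∀ i, 1 ≤ i → ∀ ω, -2 ≤ V i ω := by
    intro i hi ω
    rcases hrange i hi ω with h | h | h <;> rw [h] <;> norm_num
  have hSlb : ∀ (n : ℕ) (ω : Ω), -(2 * (n : ℝ)) ≤ ∑ i ∈ Finset.Icc 1 n, V i ω := by
    intro n ω
    have : ∑ i ∈ Finset.Icc 1 n, (-2 : ℝ) ≤ ∑ i ∈ Finset.Icc 1 n, V i ω := by
      refine Finset.sum_le_sum (fun i hi => ?_)
      rw [Finset.mem_Icc] at hi
      exact hVlb i hi.1 ω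
    refine le_trans (le_of_eq ?_) this
    rw [Finset.sum_const, Nat.card_Icc]
    simp; ring
  have hg0 : ∀ (n : ℕ) (ω : Ω), 0 ≤ v ^ (-(∑ i ∈ Finset.Icc 1 n, V i ω)) := by
    intro n ω; exact le_of_lt (Real.rpow_pos_of_pos hv0 _)
  have hgC : ∀ (n : ℕ) (ω : Ω), v ^ (-(∑ i ∈ Finset.Icc 1 n, V i ω)) ≤ v ^ (2 * (n:ℝ)) := by
    intro n ω
    refine Real.rpow_le_rpow_of_exponent_le hv ?_
    have := hSlb n ω; linarith
  have hCpos : ∀ n : ℕ, 0 ≤ v ^ (2 * (n:ℝ)) :=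
    fun n => le_of_lt (Real.rpow_pos_of_pos hv0 _)
  -- main induction
  induction n with
  | zero =>
      simp only [pow_zero]
      have : Finset.Icc 1 0 = (∅ : Finset ℕ) := by decide
      simp [this]
  | succ n ih =>
      have hsum : ∀ ω, ∑ i ∈ Finset.Icc 1 (n + 1), V i ω
          = (∑ i ∈ Finset.Icc 1 n, V i ω) + V (n + 1) ω := by
        intro ω
        exact Finset.sum_Icc_succ_top (Nat.one_le_iff_ne_zero.mpr (Nat.succ_ne_zero n)) _
      set A2 : Set Ω := {ω | V (n + 1) ω = -2} with hA2def
      set A1 : Set Ω := {ω | V (n + 1) ω = -1} with hA1def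
      have hVm : Measurable (V (n + 1)) :=
        ((hmeas (n + 1) (Nat.le_add_left 1 n)).mono (ℱ.le _)).measurable
      have hA2 : MeasurableSet A2 := hVm (measurableSet_singleton (-2))
      have hA1 : MeasurableSet A1 := hVm (measurableSet_singleton (-1))
      set g : Ω → ℝ := fun ω => v ^ (-(∑ i ∈ Finset.Icc 1 n, V i ω)) with hgdef
      -- pointwise identity
      have hpt : ∀ ω, v ^ (-(∑ i ∈ Finset.Icc 1 (n + 1), V i ω))
          = g ω * v⁻¹
            + (v^2 - v⁻¹) * (g ω * A2.indicator (fun _ => (1:ℝ)) ω)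
            + (v - v⁻¹) * (g ω * A1.indicator (fun _ => (1:ℝ)) ω) := by
        intro ω
        rw [hsum ω, neg_add, Real.rpow_add hv0]
        rcases hrange (n + 1) (Nat.le_add_left 1 n) ω with h | h | h
        · have hm2 : ω ∈ A2 := h
          have hm1 : ω ∉ A1 := by
            simp only [hA1def, Set.mem_setOf_eq, h]; norm_num
          rw [Set.indicator_of_mem hm2, Set.indicator_of_notMem hm1, h]
          have : v ^ (-(-2) : ℝ) = v ^ 2 := by
            rw [show (-(-2) : ℝ) = ((2:ℕ):ℝ) by norm_num, Real.rpow_natCast]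
          rw [this]; ring
        · have hm2 : ω ∉ A2 := by
            simp only [hA2def, Set.mem_setOf_eq, h]; norm_num
          have hm1 : ω ∈ A1 := h
          rw [Set.indicator_of_mem hm1, Set.indicator_of_notMem hm2, h]
          rw [show (-(-1) : ℝ) = (1:ℝ) by norm_num, Real.rpow_one]; ring
        · have hm2 : ω ∉ A2 := by
            simp only [hA2def, Set.mem_setOf_eq, h]; norm_num
          have hm1 : ω ∉ A1 := by
            simp only [hA1def, Set.mem_setOf_eq, h]; norm_num
          rw [Set.indicator_of_notMem hm1, Set.indicator_of_notMem hm2, h,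
            Real.rpow_neg_one]; ring
      -- integrability facts
      have hgam : AEStronglyMeasurable g P := ((hg n).mono (ℱ.le n)).aestronglyMeasurable
      have hgint : Integrable g P := integrable_of_bdd hgam (fun ω => by
        rw [Real.norm_eq_abs, abs_of_nonneg (hg0 n ω)]; exact hgC n ω)
      have hindint : ∀ (A : Set Ω), MeasurableSet A →
          Integrable (fun ω => g ω * A.indicator (fun _ => (1:ℝ)) ω) P := by
        intro A hA
        refine integrable_of_bdd (hgam.mul (integrable_indicator_one P hA).1)
          (C := v ^ (2 * (n:ℝ))) (fun ω => ?_)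
        rw [Real.norm_eq_abs, abs_mul]
        by_cases hω : ω ∈ A
        · simp only [Set.indicator_of_mem hω, abs_one, mul_one,
            abs_of_nonneg (hg0 n ω)]
          exact (abs_of_nonneg (hg0 n ω)).le.trans (hgC n ω)
        · simp only [Set.indicator_of_notMem hω, abs_zero, mul_zero]
          exact hCpos n
      have hint2 : Integrable (fun ω => g ω * A2.indicator (fun _ => (1:ℝ)) ω) P :=
        hindint A2 hA2
      have hint1 : Integrable (fun ω => g ω * A1.indicator (fun _ => (1:ℝ)) ω) P :=
        hindint A1 hA1
      -- split the integral
      have hsplit : ∫ ω, v ^ (-(∑ i ∈ Finset.Icc 1 (n + 1), V i ω)) ∂P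
          = (∫ ω, g ω ∂P) * v⁻¹
            + (v^2 - v⁻¹) * ∫ ω, g ω * A2.indicator (fun _ => (1:ℝ)) ω ∂P
            + (v - v⁻¹) * ∫ ω, g ω * A1.indicator (fun _ => (1:ℝ)) ω ∂P := by
        have : ∫ ω, v ^ (-(∑ i ∈ Finset.Icc 1 (n + 1), V i ω)) ∂P
            = ∫ ω, (g ω * v⁻¹
              + (v^2 - v⁻¹) * (g ω * A2.indicator (fun _ => (1:ℝ)) ω)
              + (v - v⁻¹) * (g ω * A1.indicator (fun _ => (1:ℝ)) ω)) ∂P := by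
          exact integral_congr_ae (ae_of_all _ hpt)
        have iA : Integrable (fun ω => g ω * v⁻¹) P := hgint.mul_const _
        have iB : Integrable (fun ω => (v^2 - v⁻¹)
            * (g ω * A2.indicator (fun _ => (1:ℝ)) ω)) P := hint2.const_mul _
        have iC : Integrable (fun ω => (v - v⁻¹)
            * (g ω * A1.indicator (fun _ => (1:ℝ)) ω)) P := hint1.const_mul _
        have iAB : Integrable (fun ω => g ω * v⁻¹ + (v^2 - v⁻¹)
            * (g ω * A2.indicator (fun _ => (1:ℝ)) ω)) P := iA.add iB
        rw [this, integral_add iAB iC, integral_add iA iB,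
          integral_mul_const, integral_const_mul, integral_const_mul]
      rw [hsplit]
      -- conditional expectation bounds
      have hcbound := h2 (n + 1) (Nat.le_add_left 1 n)
      have hcbound1 := h1 (n + 1) (Nat.le_add_left 1 n)
      simp only [Nat.add_sub_cancel] at hcbound hcbound1
      have hkey2 : ∫ ω, g ω * A2.indicator (fun _ => (1:ℝ)) ω ∂P
          ≤ (2 / (2 + b)) * ∫ ω, g ω ∂P :=
        key_abstract P (ℱ.le n) (hg n) (hCpos n) (hg0 n) (hgC n) hA2 hcbound
      have hkey1 : ∫ ω, g ω * A1.indicator (fun _ => (1:ℝ)) ω ∂P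
          ≤ (2 / (2 + b)) * ∫ ω, g ω ∂P :=
        key_abstract P (ℱ.le n) (hg n) (hCpos n) (hg0 n) (hgC n) hA1 hcbound1
      set I : ℝ := ∫ ω, g ω ∂P with hIdef
      have hI0 : 0 ≤ I := integral_nonneg (hg0 n)
      have hc2 : 0 ≤ v^2 - v⁻¹ := by
        have h1' : v⁻¹ ≤ 1 := inv_le_one_of_one_le₀ hv
        have h2' : 0 ≤ v⁻¹ := inv_nonneg.mpr hv0.le
        nlinarith
      have hc1 : 0 ≤ v - v⁻¹ := by
        have h1' : v⁻¹ ≤ 1 := inv_le_one_of_one_le₀ hv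
        linarith
      have hstep : I * v⁻¹ + (v^2 - v⁻¹) * ((2 / (2 + b)) * I)
          + (v - v⁻¹) * ((2 / (2 + b)) * I) = γ * I := by
        rw [hγdef]; field_simp; ring
      calc I * v⁻¹
            + (v^2 - v⁻¹) * ∫ ω, g ω * A2.indicator (fun _ => (1:ℝ)) ω ∂P
            + (v - v⁻¹) * ∫ ω, g ω * A1.indicator (fun _ => (1:ℝ)) ω ∂P
          ≤ I * v⁻¹ + (v^2 - v⁻¹) * ((2 / (2 + b)) * I)
            + (v - v⁻¹) * ((2 / (2 + b)) * I) := by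
            exact add_le_add (add_le_add le_rfl
              (mul_le_mul_of_nonneg_left hkey2 hc2))
              (mul_le_mul_of_nonneg_left hkey1 hc1)
        _ = γ * I := hstep
        _ ≤ γ * γ ^ n := mul_le_mul_of_nonneg_left ih hγ0
        _ = γ ^ (n + 1) := by rw [pow_succ]; ring
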